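/- (Lemma 2) Let g ≥ 1. Under the identification of the vertices of L(G^(g−1)) with the length-g directed paths of G: (a) every arc of G^(g) is an arc of L(G^(g−1)); and (b) an arc of L(G^(g−1)) fails to be an arc of G^(g) if and only if it lies on some directed cycle of length g+1 in L(G^(g−1)). Hence G^(g) is obtained from L(G^(g−1)) by deleting exactly those arcs lying on directed cycles of length g+1. -/

import Mathlib

open Matrix ENNReal

namespace PercNB

variable {V : Type*} [Fintype V] [DecidableEq V]

/-- `p : Fin (g+1) → V` is a length-`g` directed path in the simple graph `G`:
`g+1` pairwise distinct vertices with consecutive vertices adjacent. -/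
def IsDiPath (G : SimpleGraph V) (g : ℕ) (p : Fin (g+1) → V) : Prop :=
  Function.Injective p ∧ ∀ k : Fin g, G.Adj (p k.castSucc) (p k.succ)

instance (G : SimpleGraph V) [DecidableRel G.Adj] (g : ℕ) :
    DecidablePred (IsDiPath G g) := fun p =>
  inferInstanceAs (Decidable (Function.Injective p ∧ ∀ k : Fin g, G.Adj (p k.castSucc) (p k.succ)))

/-- The type of length-`g` directed paths of `G`. -/
abbrev DiPath (G : SimpleGraph V) (g : ℕ) := {p : Fin (g+1) → V // IsDiPath G g p}

/-- The `g`-th-order non-backtracking matrix `B^(g)` of `G`, indexed by the length-`g`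
directed paths of `G`: the `(p, q)` entry is `1` if `q k = p (k+1)` for `1 ≤ k ≤ g` and
`(p 1, …, p (g+1), q (g+1))` is a length-`(g+1)` directed path, and `0` otherwise. -/
def NBM (G : SimpleGraph V) [DecidableRel G.Adj] (g : ℕ) :
    Matrix (DiPath G g) (DiPath G g) ℂ := fun p q =>
  if (∀ k : Fin g, q.1 k.castSucc = p.1 k.succ) ∧
      IsDiPath G (g+1) (Fin.snoc p.1 (q.1 (Fin.last g))) then 1 else 0

/-- The spectral radius of a finite square complex matrix:
the maximum modulus of its eigenvalues (`0` if the index type is empty). -/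
noncomputable def specRad {n : Type*} [Fintype n] [DecidableEq n] (X : Matrix n n ℂ) : ℝ≥0∞ :=
  spectralRadius ℂ X

/-- `c : Fin k → V` is a simple cycle of length `k ≥ 3` in `G`: pairwise distinct vertices
with `c t` adjacent to `c (t+1)` for `1 ≤ t ≤ k-1` and `c k` adjacent to `c 1`. -/
def IsSimpleCycle (G : SimpleGraph V) (k : ℕ) (c : Fin k → V) : Prop :=
  3 ≤ k ∧ Function.Injective c ∧
    ∀ t : Fin k, G.Adj (c t) (c ⟨(t.val + 1) % k, Nat.mod_lt _ t.pos⟩)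

/-- The arc relation of the digraph `G^(g)` on the length-`g` directed paths of `G`:
`p → q` exactly when `B^(g)_{p,q} = 1`. -/
def NBArc (G : SimpleGraph V) (g : ℕ) (p q : DiPath G g) : Prop :=
  (∀ k : Fin g, q.1 k.castSucc = p.1 k.succ) ∧
    IsDiPath G (g+1) (Fin.snoc p.1 (q.1 (Fin.last g)))

/-- The arc relation of the line digraph `L(G^(g-1))` (for `g ≥ 1`), under the identification
of its vertices — the arcs `(i₁,…,i_g) → (i₂,…,i_{g+1})` of `G^(g-1)` — with the length-`g`
directed paths `(i₁,…,i_{g+1})` of `G`: there is an arc `p → q` exactly when the arc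
corresponding to `p` ends at the tail of the arc corresponding to `q`, i.e. when
`q k = p (k+1)` for `1 ≤ k ≤ g`. -/
def LineArc (G : SimpleGraph V) (g : ℕ) (p q : DiPath G g) : Prop :=
  ∀ k : Fin g, q.1 k.castSucc = p.1 k.succ

/-- `c : Fin k → α` is a directed cycle of length `k` with respect to the arc relation `r`:
`k` pairwise distinct vertices with an arc from each to the cyclically next one. -/
def IsDiCycle {α : Type*} (r : α → α → Prop) (k : ℕ) (c : Fin k → α) : Prop :=
  Function.Injective c ∧ ∀ t : Fin k, r (c t) (c ⟨(t.val + 1) % k, Nat.mod_lt _ t.pos⟩)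

/-- The type of directed edges of `G`: ordered pairs of adjacent vertices. -/
abbrev DiEdge (G : SimpleGraph V) := {e : V × V // G.Adj e.1 e.2}

/-- The standard non-backtracking matrix `B = B^(1)`, indexed by directed edges:
`B_{(i,j),(k,l)} = 1` iff `j = k`, `l ≠ i` and `j` is adjacent to `l`. -/
def Bmat (G : SimpleGraph V) [DecidableRel G.Adj] : Matrix (DiEdge G) (DiEdge G) ℂ :=
  fun e f => if e.1.2 = f.1.1 ∧ f.1.2 ≠ e.1.1 ∧ G.Adj e.1.2 f.1.2 then 1 else 0

/-- `(ΔB₁)_{(i,j),(k,l)} = 1` iff `B_{(i,j),(k,l)} = 1` and `i` is adjacent to `l`. -/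
def dB1 (G : SimpleGraph V) [DecidableRel G.Adj] : Matrix (DiEdge G) (DiEdge G) ℂ :=
  fun e f => if (e.1.2 = f.1.1 ∧ f.1.2 ≠ e.1.1 ∧ G.Adj e.1.2 f.1.2) ∧ G.Adj e.1.1 f.1.2
    then 1 else 0

/-- `(ΔB₂)_{(i,j),(k,l)} = 1` iff `l = i` and `j` is adjacent to `k`. -/
def dB2 (G : SimpleGraph V) [DecidableRel G.Adj] : Matrix (DiEdge G) (DiEdge G) ℂ :=
  fun e f => if f.1.2 = e.1.1 ∧ G.Adj e.1.2 f.1.1 then 1 else 0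

/-- The diagonal matrix `D_Δ` whose `((i,j),(i,j))` entry is the number of common
neighbours of `i` and `j`. -/
noncomputable def Ddel (G : SimpleGraph V) [DecidableRel G.Adj] :
    Matrix (DiEdge G) (DiEdge G) ℂ :=
  Matrix.diagonal fun e =>
    ((Finset.univ.filter fun v => G.Adj e.1.1 v ∧ G.Adj e.1.2 v).card : ℂ)

/-- The `8E × 8E` block matrix
`M = [[B, −ΔB₂, D_Δ − I, B − ΔB₁], [I, 0, 0, 0], [0, I, 0, 0], [0, 0, I, 0]]`. -/
noncomputable def Mmat (G : SimpleGraph V) [DecidableRel G.Adj] :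
    Matrix ((DiEdge G ⊕ DiEdge G) ⊕ (DiEdge G ⊕ DiEdge G))
      ((DiEdge G ⊕ DiEdge G) ⊕ (DiEdge G ⊕ DiEdge G)) ℂ :=
  Matrix.fromBlocks
    (Matrix.fromBlocks (Bmat G) (-(dB2 G)) 1 0)
    (Matrix.fromBlocks (Ddel G - 1) (Bmat G - dB1 G) 0 0)
    (Matrix.fromBlocks 0 1 0 0)
    (Matrix.fromBlocks 0 0 1 0)

/-- `x_{(i,j)} = Σ_k ψ_{(i,j,k)}`, the sum over all vertices `k` adjacent to `j` with
`k ≠ i`; equivalently, the sum of `ψ` over all length-2 directed paths starting `(i,j,·)`. -/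
noncomputable def xvec (G : SimpleGraph V) [DecidableRel G.Adj] (ψ : DiPath G 2 → ℂ) :
    DiEdge G → ℂ := fun e =>
  ∑ p ∈ Finset.univ.filter (fun p : DiPath G 2 => p.1 0 = e.1.1 ∧ p.1 1 = e.1.2), ψ p

/-- `y_{(i,j)} = Σ_k ψ_{(i,j,k)}`, the sum over all vertices `k` adjacent to both `i`
and `j`. -/
noncomputable def yvec (G : SimpleGraph V) [DecidableRel G.Adj] (ψ : DiPath G 2 → ℂ) :
    DiEdge G → ℂ := fun e =>
  ∑ p ∈ Finset.univ.filter
    (fun p : DiPath G 2 => p.1 0 = e.1.1 ∧ p.1 1 = e.1.2 ∧ G.Adj e.1.1 (p.1 2)), ψ p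

/-- The block vector `z = (x, λ⁻¹x, λ⁻²x, λ⁻³x)`. -/
noncomputable def blockVec {G : SimpleGraph V} (lam : ℂ) (x : DiEdge G → ℂ) :
    (DiEdge G ⊕ DiEdge G) ⊕ (DiEdge G ⊕ DiEdge G) → ℂ :=
  Sum.elim (Sum.elim x (lam⁻¹ • x)) (Sum.elim ((lam ^ 2)⁻¹ • x) ((lam ^ 3)⁻¹ • x))

/-- The vector `ψ` built from `x`:
`ψ_{(i,j,k)} = (λ²x_{(j,k)} − λx_{(k,i)} + x_{(i,j)})/(λ³+1)` if `i` and `k` are adjacent,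
and `ψ_{(i,j,k)} = λ⁻¹ x_{(j,k)}` if `i` and `k` are not adjacent. -/
noncomputable def psiOf (G : SimpleGraph V) [DecidableRel G.Adj] (lam : ℂ)
    (x : DiEdge G → ℂ) : DiPath G 2 → ℂ := fun p =>
  if h : G.Adj (p.1 0) (p.1 2) then
    (lam ^ 2 * x ⟨(p.1 1, p.1 2), by simpa using p.2.2 1⟩
      - lam * x ⟨(p.1 2, p.1 0), h.symm⟩
      + x ⟨(p.1 0, p.1 1), by simpa using p.2.2 0⟩) / (lam ^ 3 + 1)
  else lam⁻¹ * x ⟨(p.1 1, p.1 2), by simpa using p.2.2 1⟩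

open Fin.CommRing

section Lemma2Aux

variable {V : Type*} [Fintype V] [DecidableEq V]

private lemma modIdx {n : ℕ} (t : Fin (n+1)) :
    (⟨(t.val + 1) % (n+1), Nat.mod_lt _ t.pos⟩ : Fin (n+1)) = t + 1 := by
  ext
  simp only [Fin.add_def, Fin.val_one']
  conv_lhs => rw [Nat.add_mod]
  conv_rhs => rw [Nat.add_mod, Nat.mod_mod_of_dvd 1 dvd_rfl]

private lemma succ_eq {n : ℕ} (k : Fin n) : k.succ = k.castSucc + 1 := by
  have hn : 1 < n + 1 := by have := k.isLt; omega
  ext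
  rw [Fin.add_def, Fin.val_one']
  simp only [Fin.val_succ, Fin.coe_castSucc, Nat.mod_eq_of_lt hn]
  exact (Nat.mod_eq_of_lt (by have := k.isLt; omega)).symm

private lemma one_add_last {m : ℕ} : (1 : Fin (m+2)) + Fin.last (m+1) = 0 := by
  ext
  simp only [Fin.add_def, Fin.val_one', Fin.val_last, Fin.val_zero]
  rw [Nat.mod_eq_of_lt (show (1:ℕ) < m+2 by omega)]
  rw [show 1 + (m+1) = m+2 by omega, Nat.mod_self]

private lemma one_add_castSucc {m : ℕ} (k : Fin (m+1)) :
    (1 : Fin (m+2)) + k.castSucc = k.succ := by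
  ext
  simp only [Fin.add_def, Fin.val_one', Fin.val_succ, Fin.coe_castSucc]
  rw [Nat.mod_eq_of_lt (show (1:ℕ) < m+2 by omega)]
  rw [Nat.mod_eq_of_lt (by have := k.isLt; omega)]
  omega

private lemma chain {G : SimpleGraph V} {n : ℕ} {c : Fin (n+2) → DiPath G (n+1)}
    (hc : ∀ t, LineArc G (n+1) (c t) (c (t+1))) :
    ∀ j : ℕ, j ≤ n+1 → ∀ t : Fin (n+2),
      (c (t + (j : Fin (n+2)))).1 ⟨n+1-j, by omega⟩ = (c t).1 (Fin.last (n+1)) := by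
  intro j
  induction j with
  | zero =>
    intro _ t
    simp only [Nat.cast_zero, add_zero, Nat.sub_zero]
    rfl
  | succ j ih =>
    intro hj t
    have hk := hc (t + (j : Fin (n+2))) ⟨n + 1 - (j+1), by omega⟩
    have e1 : (⟨n + 1 - (j+1), by omega⟩ : Fin (n+1)).castSucc
        = (⟨n + 1 - (j+1), by omega⟩ : Fin (n+2)) := rfl
    have e2 : (⟨n + 1 - (j+1), by omega⟩ : Fin (n+1)).succ
        = (⟨n + 1 - j, by omega⟩ : Fin (n+2)) := by
      ext; simp only [Fin.val_succ]; omega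
    rw [e1, e2] at hk
    have e3 : t + ((j+1 : ℕ) : Fin (n+2)) = (t + (j : Fin (n+2))) + 1 := by
      push_cast; ring
    rw [e3, hk]
    exact ih (by omega) t

/-- Under `LineArc`, `¬ NBArc` is equivalent to the last vertex of `q` equalling the
first vertex of `p`. -/
private lemma notNB_iff {G : SimpleGraph V} [DecidableRel G.Adj] {n : ℕ}
    {p q : DiPath G (n+1)} (hpq : LineArc G (n+1) p q) :
    ¬ NBArc G (n+1) p q ↔ q.1 (Fin.last (n+1)) = p.1 0 := by
  constructor
  · intro hnb
    by_contra hne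
    apply hnb
    refine ⟨hpq, ?_, ?_⟩
    · -- injectivity of the snoc
      have hx : ∀ i : Fin (n+2), q.1 (Fin.last (n+1)) ≠ p.1 i := by
        intro i
        induction i using Fin.cases with
        | zero => exact hne
        | succ k =>
          intro h
          have h2 : q.1 (Fin.last (n+1)) = q.1 k.castSucc := h.trans (hpq k).symm
          exact absurd (q.2.1 h2) (Fin.castSucc_lt_last k).ne'
      intro a b hab
      induction a using Fin.lastCases with
      | last =>
        induction b using Fin.lastCases with
        | last => rfl
        | cast b =>
          rw [Fin.snoc_last, Fin.snoc_castSucc] at hab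
          exact absurd hab (hx b)
      | cast a =>
        induction b using Fin.lastCases with
        | last =>
          rw [Fin.snoc_last, Fin.snoc_castSucc] at hab
          exact absurd hab.symm (hx a)
        | cast b =>
          rw [Fin.snoc_castSucc, Fin.snoc_castSucc] at hab
          exact congrArg Fin.castSucc (p.2.1 hab)
    · -- adjacency of the snoc
      intro k
      induction k using Fin.lastCases with
      | last =>
        rw [Fin.succ_last]
        rw [show (Fin.last (n+1)).castSucc = ((Fin.last n).succ).castSucc by
          rw [Fin.succ_last]]
        rw [Fin.snoc_last, Fin.snoc_castSucc]
        have hadjq := q.2.2 (Fin.last n)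
        rw [hpq (Fin.last n), Fin.succ_last] at hadjq
        exact hadjq
      | cast k =>
        rw [Fin.succ_castSucc, Fin.snoc_castSucc, Fin.snoc_castSucc]
        exact p.2.2 k
  · intro hqp hnb
    have hinj := hnb.2.1
    have h0 : (Fin.snoc p.1 (q.1 (Fin.last (n+1))) : Fin (n+3) → V) ((0 : Fin (n+2)).castSucc)
        = (Fin.snoc p.1 (q.1 (Fin.last (n+1))) : Fin (n+3) → V) (Fin.last (n+2)) := by
      rw [Fin.snoc_castSucc, Fin.snoc_last, hqp]
    have := hinj h0
    have hval := congrArg Fin.val this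
    simp only [Fin.coe_castSucc, Fin.val_zero, Fin.val_last] at hval
    omega

end Lemma2Aux

/-- **Lemma 2.** For `g ≥ 1`, under the identification of the vertices of `L(G^(g-1))` with
the length-`g` directed paths of `G`: (a) every arc of `G^(g)` is an arc of `L(G^(g-1))`;
and (b) an arc of `L(G^(g-1))` fails to be an arc of `G^(g)` if and only if it lies on some
directed cycle of length `g+1` in `L(G^(g-1))`. -/
theorem lineArc_eq_nbArc_del_cycles (G : SimpleGraph V) [DecidableRel G.Adj] (g : ℕ)
    (hg : 1 ≤ g) :
    (∀ p q : DiPath G g, NBArc G g p q → LineArc G g p q) ∧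
    (∀ p q : DiPath G g, LineArc G g p q →
      (¬ NBArc G g p q ↔
        ∃ c : Fin (g + 1) → DiPath G g, IsDiCycle (LineArc G g) (g + 1) c ∧
          ∃ t : Fin (g + 1),
            c t = p ∧ c ⟨(t.val + 1) % (g + 1), Nat.mod_lt _ t.pos⟩ = q)) := by
  obtain ⟨n, rfl⟩ : ∃ n, g = n + 1 := ⟨g - 1, by omega⟩
  refine ⟨fun p q h => h.1, fun p q hpq => ?_⟩
  rw [notNB_iff hpq]
  constructor
  · -- q last = p 0 → cycle exists
    intro hqp
    have hadj : ∀ i : Fin (n+2), G.Adj (p.1 i) (p.1 (i+1)) := by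
      intro i
      induction i using Fin.lastCases with
      | last =>
        rw [show Fin.last (n+1) + 1 = 0 from Fin.last_add_one (n+1)]
        have hadjq := q.2.2 (Fin.last n)
        rw [hpq (Fin.last n), Fin.succ_last, hqp] at hadjq
        exact hadjq
      | cast i =>
        rw [← succ_eq i]
        exact p.2.2 i
    have hpath : ∀ t : Fin (n+2), IsDiPath G (n+1) (fun k => p.1 (t + k)) := by
      intro t
      refine ⟨fun a b hab => add_left_cancel (p.2.1 hab), fun k => ?_⟩
      have h2 : t + k.succ = (t + k.castSucc) + 1 := by rw [succ_eq]; ring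
      simp only [h2]
      exact hadj _
    refine ⟨fun t => ⟨fun k => p.1 (t + k), hpath t⟩, ⟨?_, ?_⟩, 0, ?_, ?_⟩
    · intro a b hab
      have h3 := congrArg (fun d : DiPath G (n+1) => d.1 0) hab
      simp only [add_zero] at h3
      have h2 := p.2.1 h3
      simpa using h2
    · intro t
      rw [modIdx]
      intro k
      show p.1 (t + 1 + k.castSucc) = p.1 (t + k.succ)
      congr 1
      rw [succ_eq]; ring
    · exact Subtype.ext (funext fun k => by simp)
    · rw [modIdx]
      refine Subtype.ext (funext fun k => ?_)
      show p.1 (0 + 1 + k) = q.1 k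
      rw [zero_add]
      induction k using Fin.lastCases with
      | last =>
        rw [one_add_last]
        exact hqp.symm
      | cast k =>
        rw [one_add_castSucc]
        exact (hpq k).symm
  · rintro ⟨c, ⟨hcinj, hcarc⟩, t, rfl, rfl⟩
    have hc : ∀ t, LineArc G (n+1) (c t) (c (t+1)) := by
      intro t
      have h4 := hcarc t
      rwa [modIdx] at h4
    rw [modIdx]
    have key := chain hc (n+1) le_rfl (t + 1)
    have e1 : (t + 1) + ((n+1 : ℕ) : Fin (n+2)) = t := by
      ext
      simp only [Fin.add_def, Fin.val_one', Fin.val_natCast]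
      rw [Nat.mod_eq_of_lt (show (1:ℕ) < n+2 by omega),
        Nat.mod_eq_of_lt (show n+1 < n+2 by omega)]
      have ht := t.isLt
      rcases Nat.lt_or_ge (t.val + 1) (n+2) with h | h
      · rw [Nat.mod_eq_of_lt h, show t.val + 1 + (n+1) = t.val + (n+2) by omega,
          Nat.add_mod_right, Nat.mod_eq_of_lt ht]
      · have h2 : t.val = n+1 := by omega
        rw [show (t.val+1) % (n+2) = 0 by rw [h2]; exact Nat.mod_self (n+2)]
        rw [Nat.zero_add, Nat.mod_eq_of_lt (by omega), h2]
    have e2 : (⟨n+1-(n+1), by omega⟩ : Fin (n+2)) = 0 := by ext; simp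
    rw [e1, e2] at key
    exact key.symm


end PercNB
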